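/- For all integers i \geq -1 and j \geq -1, D(i, j + 1/2) = \sum_{\ell=0}^{\lceil i/2 \rceil} (-1)^{\ell} \binom{-1/2}{\ell} H(i - 2\ell, j), where D(i,x) = \sum_{m=0}^{i}\binom{i}{m}\binom{x}{m}2^{m} for i \geq 0 (and D(-1,x)=0), and H(i,j) = D(i,j) + D(i-1,j) for i,j \geq 0, with H(0,-1)=1 and H(i,j)=0 for i<0 or (j<0, (i,j)\neq(0,-1)). -/

import Mathlib

/-- The Delannoy numbers on natural numbers. -/
def del : ℕ → ℕ → ℕ
  | 0, 0 => 1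
  | 0, j+1 => del 0 j
  | i+1, 0 => del i 0
  | i+1, j+1 => del i (j+1) + del (i+1) j + del i j
termination_by i j => i + j

/-- The Delannoy numbers extended to all integers: `0` if either argument is negative. -/
def Dint (i j : ℤ) : ℤ := if i < 0 ∨ j < 0 then 0 else del i.toNat j.toNat

/-- `H(i,j) = D(i,j) + D(i-1,j)` for `i, j ≥ 0`, with `H(0,-1) = 1` and `H = 0`
for other negative arguments. -/
def Hfun (i j : ℤ) : ℤ :=
  if i = 0 ∧ j = -1 then 1
  else if i < 0 ∨ j < 0 then 0
  else Dint i j + Dint (i-1) j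

/-- Generalized binomial coefficient `x(x-1)⋯(x-m+1)/m!` for real `x`. -/
noncomputable def rchoose (x : ℝ) (m : ℕ) : ℝ :=
  (∏ t ∈ Finset.range m, (x - t)) / Nat.factorial m

/-- The polynomial extension of the Delannoy numbers in the second argument,
with `D(i, x) = 0` for `i < 0`. -/
noncomputable def DR (i : ℤ) (x : ℝ) : ℝ :=
  if i < 0 then 0
  else ∑ m ∈ Finset.range (i.toNat + 1), (Nat.choose i.toNat m : ℝ) * rchoose x m * 2 ^ m

lemma rchoose_zero (x : ℝ) : rchoose x 0 = 1 := by
  simp [rchoose]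

lemma rchoose_succ (x : ℝ) (m : ℕ) :
    rchoose x (m+1) = rchoose x m * (x - m) / (m+1) := by
  have h1 : (Nat.factorial m : ℝ) ≠ 0 := by positivity
  have h2 : ((m:ℝ)+1) ≠ 0 := by positivity
  simp only [rchoose, Finset.prod_range_succ, Nat.factorial_succ]
  push_cast
  rw [div_mul_eq_mul_div, div_div, mul_comm ((m:ℝ)+1)]

lemma rchoose_pascal (x : ℝ) (m : ℕ) :
    rchoose x (m+1) = rchoose (x-1) (m+1) + rchoose (x-1) m := by
  have hprod : (∏ t ∈ Finset.range (m+1), (x - t)) =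
      (∏ t ∈ Finset.range m, (x - 1 - t)) * x := by
    rw [Finset.prod_range_succ']
    congr 1
    · apply Finset.prod_congr rfl
      intro t _
      push_cast
      ring
    · norm_num
  have hprod2 : (∏ t ∈ Finset.range (m+1), (x - 1 - t)) =
      (∏ t ∈ Finset.range m, (x - 1 - t)) * (x - 1 - m) := Finset.prod_range_succ _ _
  have h1 : (Nat.factorial m : ℝ) ≠ 0 := by positivity
  have h2 : ((m:ℝ)+1) ≠ 0 := by positivity
  simp only [rchoose, hprod, hprod2, Nat.factorial_succ]
  push_cast
  field_simp
  ring

noncomputable def Sn (n : ℕ) (x : ℝ) : ℝ :=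
  ∑ m ∈ Finset.range (n+1), (n.choose m : ℝ) * rchoose x m * 2 ^ m

lemma Sn_sub (n : ℕ) (x : ℝ) :
    Sn n x - Sn n (x-1) =
      ∑ m ∈ Finset.range n, (n.choose (m+1) : ℝ) * rchoose (x-1) m * 2 ^ (m+1) := by
  unfold Sn
  rw [← Finset.sum_sub_distrib]
  rw [Finset.sum_range_succ']
  have h0 : (n.choose 0 : ℝ) * rchoose x 0 * 2 ^ 0 - (n.choose 0 : ℝ) * rchoose (x-1) 0 * 2 ^ 0 = 0 := by
    rw [rchoose_zero, rchoose_zero]; ring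
  rw [h0, add_zero]
  apply Finset.sum_congr rfl
  intro m _
  rw [rchoose_pascal x m]
  ring

lemma Sn_rec (a : ℕ) (x : ℝ) :
    Sn (a+1) x = Sn a x + Sn (a+1) (x-1) + Sn a (x-1) := by
  have key : Sn (a+1) x - Sn (a+1) (x-1) = 2 * Sn a (x-1) + (Sn a x - Sn a (x-1)) := by
    rw [Sn_sub, Sn_sub]
    have hsplit : ∀ m ∈ Finset.range (a+1),
        ((a+1).choose (m+1) : ℝ) * rchoose (x-1) m * 2 ^ (m+1)
        = 2 * ((a.choose m : ℝ) * rchoose (x-1) m * 2 ^ m)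
          + (a.choose (m+1) : ℝ) * rchoose (x-1) m * 2 ^ (m+1) := by
      intro m _
      rw [Nat.choose_succ_succ]
      push_cast
      ring
    rw [Finset.sum_congr rfl hsplit, Finset.sum_add_distrib, ← Finset.mul_sum]
    have hlast : ∑ m ∈ Finset.range (a+1), (a.choose (m+1) : ℝ) * rchoose (x-1) m * 2 ^ (m+1)
        = ∑ m ∈ Finset.range a, (a.choose (m+1) : ℝ) * rchoose (x-1) m * 2 ^ (m+1) := by
      rw [Finset.sum_range_succ, Nat.choose_succ_self]
      norm_num
    rw [hlast]
    unfold Sn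
    ring
  linarith [key]

lemma DR_neg {i : ℤ} (h : i < 0) (x : ℝ) : DR i x = 0 := by
  simp [DR, h]

lemma DR_eq_Sn {i : ℤ} (h : 0 ≤ i) (x : ℝ) : DR i x = Sn i.toNat x := by
  rw [DR, if_neg (by omega)]; rfl

lemma DR_zero (x : ℝ) : DR 0 x = 1 := by
  rw [DR_eq_Sn le_rfl]
  simp [Sn, rchoose_zero]

lemma DR_rec (i : ℤ) (x : ℝ) :
    DR i x = DR (i-1) x + DR i (x-1) + DR (i-1) (x-1) := by
  rcases lt_trichotomy i 0 with h | h | h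
  · rw [DR_neg h, DR_neg h, DR_neg (by omega), DR_neg (by omega)]; ring
  · subst h
    rw [DR_zero, DR_zero, DR_neg (by omega), DR_neg (by omega)]; ring
  · have h1 : (0:ℤ) ≤ i - 1 := by omega
    obtain ⟨a, ha⟩ : ∃ a : ℕ, (i-1).toNat = a := ⟨_, rfl⟩
    have hia : i.toNat = a + 1 := by omega
    have h2 : (0:ℤ) ≤ i := by omega
    rw [DR_eq_Sn h2 x, DR_eq_Sn h2 (x-1), DR_eq_Sn h1 x, DR_eq_Sn h1 (x-1), ha, hia]
    exact Sn_rec a x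

lemma del_zero_left (j : ℕ) : del 0 j = 1 := by
  induction j with
  | zero => rw [del]
  | succ j ih => rw [del]; exact ih

lemma del_zero_right (i : ℕ) : del i 0 = 1 := by
  induction i with
  | zero => rw [del]
  | succ i ih => rw [del]; exact ih

lemma Dint_rec (i j : ℤ) :
    Dint i j = Dint (i-1) j + Dint i (j-1) + Dint (i-1) (j-1)
      + (if i = 0 ∧ j = 0 then 1 else 0) := by
  rcases lt_trichotomy i 0 with hi | hi | hi
  · simp only [Dint, if_pos (Or.inl hi), if_pos (Or.inl (by omega : i - 1 < 0))]
    rw [if_neg (by omega)]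
    omega
  · subst hi
    rcases lt_trichotomy j 0 with hj | hj | hj
    · simp only [Dint]
      rw [if_pos (Or.inr hj), if_pos (Or.inl (by omega : (0:ℤ) - 1 < 0)),
        if_pos (Or.inr (by omega : j - 1 < 0)), if_pos (Or.inl (by omega : (0:ℤ) - 1 < 0)),
        if_neg (by omega)]
      omega
    · subst hj
      simp only [Dint]
      norm_num
      rw [del]
    · simp only [Dint]
      rw [if_neg (by omega), if_pos (Or.inl (by omega : (0:ℤ) - 1 < 0)),
        if_neg (by omega), if_pos (Or.inl (by omega : (0:ℤ) - 1 < 0)),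
        if_neg (by omega)]
      have h1 : (0:ℤ).toNat = 0 := rfl
      rw [h1, del_zero_left, del_zero_left]
      omega
  · rcases lt_trichotomy j 0 with hj | hj | hj
    · simp only [Dint]
      rw [if_pos (Or.inr hj), if_pos (Or.inr hj), if_pos (Or.inr (by omega : j - 1 < 0)),
        if_pos (Or.inr (by omega : j - 1 < 0)), if_neg (by omega)]
      omega
    · subst hj
      simp only [Dint]
      rw [if_neg (by omega), if_neg (by omega), if_pos (Or.inr (by omega : (0:ℤ) - 1 < 0)),
        if_pos (Or.inr (by omega : (0:ℤ) - 1 < 0)), if_neg (by omega)]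
      have h1 : (0:ℤ).toNat = 0 := rfl
      rw [h1, del_zero_right, del_zero_right]
      omega
    · simp only [Dint]
      rw [if_neg (by omega), if_neg (by omega), if_neg (by omega), if_neg (by omega),
        if_neg (by omega)]
      obtain ⟨a, ha⟩ : ∃ a : ℕ, i.toNat = a + 1 := ⟨(i-1).toNat, by omega⟩
      obtain ⟨b, hb⟩ : ∃ b : ℕ, j.toNat = b + 1 := ⟨(j-1).toNat, by omega⟩
      have h1 : (i-1).toNat = a := by omega
      have h2 : (j-1).toNat = b := by omega
      rw [ha, hb, h1, h2, del]
      push_cast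
      ring

lemma Dint_neg_left {i : ℤ} (h : i < 0) (j : ℤ) : Dint i j = 0 := by
  simp [Dint, h]

lemma Hfun_eq (i j : ℤ) :
    Hfun i j = Dint i j + Dint (i-1) j + (if i = 0 ∧ j = -1 then 1 else 0) := by
  unfold Hfun
  by_cases h1 : i = 0 ∧ j = -1
  · rw [if_pos h1, if_pos h1]
    obtain ⟨hi, hj⟩ := h1
    subst hi; subst hj
    rw [Dint, if_pos (Or.inr (by omega)), Dint, if_pos (Or.inl (by omega : (0:ℤ)-1 < 0))]
    norm_num
  · rw [if_neg h1, if_neg h1, add_zero]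
    by_cases h2 : i < 0 ∨ j < 0
    · rw [if_pos h2]
      rcases h2 with h | h
      · rw [Dint_neg_left h, Dint_neg_left (by omega)]; norm_num
      · rw [Dint, if_pos (Or.inr h), Dint, if_pos (Or.inr h)]; norm_num
    · rw [if_neg h2]

lemma Hfun_neg_left {i : ℤ} (h : i < 0) (j : ℤ) : Hfun i j = 0 := by
  rw [Hfun_eq, Dint_neg_left h, Dint_neg_left (by omega), if_neg (by omega)]; norm_num

lemma Hfun_neg_one (i : ℤ) : Hfun i (-1) = if i = 0 then 1 else 0 := by
  rw [Hfun_eq]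
  have h1 : Dint i (-1) = 0 := by rw [Dint, if_pos (Or.inr (by omega))]
  have h2 : Dint (i-1) (-1) = 0 := by rw [Dint, if_pos (Or.inr (by omega))]
  rw [h1, h2]
  by_cases h : i = 0 <;> simp [h]

lemma Hfun_rec (i j : ℤ) (hj : 0 ≤ j) :
    Hfun i j = Hfun (i-1) j + Hfun i (j-1) + Hfun (i-1) (j-1) := by
  rw [Hfun_eq i j, Hfun_eq (i-1) j, Hfun_eq i (j-1), Hfun_eq (i-1) (j-1)]
  rw [Dint_rec i j, Dint_rec (i-1) j]
  have e1 : (i - 1 - 1 : ℤ) = i - 2 := by ring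
  rw [e1]
  have c1 : (if i = 0 ∧ j = -1 then (1:ℤ) else 0) = 0 := by rw [if_neg (by omega)]
  have c2 : (if i - 1 = 0 ∧ j = -1 then (1:ℤ) else 0) = 0 := by rw [if_neg (by omega)]
  have c3 : (if i = 0 ∧ j - 1 = -1 then (1:ℤ) else 0) = (if i = 0 ∧ j = 0 then 1 else 0) := by
    by_cases h : i = 0 ∧ j = 0
    · rw [if_pos (by omega), if_pos h]
    · rw [if_neg (by omega), if_neg h]
  have c4 : (if i - 1 = 0 ∧ j - 1 = -1 then (1:ℤ) else 0) = (if i - 1 = 0 ∧ j = 0 then 1 else 0) := by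
    by_cases h : i - 1 = 0 ∧ j = 0
    · rw [if_pos (by omega), if_pos h]
    · rw [if_neg (by omega), if_neg h]
  rw [c1, c2, c3, c4]
  ring

lemma natL (k m : ℕ) : (k+1) * Nat.choose k m = (k+1-m) * Nat.choose (k+1) m := by
  rcases Nat.lt_or_ge k m with h | h
  · rcases Nat.eq_or_lt_of_le h with h' | h'
    · subst h'
      simp [Nat.choose_self, Nat.choose_succ_self_right]
    · rw [Nat.choose_eq_zero_of_lt h', Nat.choose_eq_zero_of_lt (by omega)]
      simp
  · -- m ≤ k
    rcases m with _ | m'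
    · simp
    · -- use succ_mul_choose_eq and choose_succ_right_eq
      have h1 : (k+1) * Nat.choose k (m'+1) = Nat.choose (k+1) (m'+2) * (m'+2) := by
        have := Nat.add_one_mul_choose_eq k (m'+1)
        simpa [Nat.succ_eq_add_one] using this
      have h2 : Nat.choose (k+1) (m'+2) * (m'+2) = Nat.choose (k+1) (m'+1) * (k+1 - (m'+1)) := by
        have := Nat.choose_succ_right_eq (k+1) (m'+1)
        simpa using this
      rw [h1, h2]
      ring

lemma cert (k m : ℕ) (hm : m ≤ k + 2) :
    ((k:ℝ)+2)^2 * ((k+2).choose m : ℝ) * (rchoose (-1/2) m * 2^m)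
      - ((k:ℝ)+2) * ((k:ℝ)+1) * (k.choose m : ℝ) * (rchoose (-1/2) m * 2^m)
    = (-(((m:ℝ)+1)^2) * ((k+2).choose (m+1) : ℝ) * (rchoose (-1/2) (m+1) * 2^(m+1)))
      - (-((m:ℝ)^2) * ((k+2).choose m : ℝ) * (rchoose (-1/2) m * 2^m)) := by
  have hA : ((k+2).choose (m+1) : ℝ) * ((m:ℝ)+1) = ((k+2).choose m : ℝ) * (((k:ℝ)+2) - m) := by
    have h := Nat.choose_succ_right_eq (k+2) m
    have hc : ((k+2) - m : ℕ) = ((k:ℝ)+2) - m := by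
      push_cast [Nat.cast_sub hm]; ring
    calc ((k+2).choose (m+1) : ℝ) * ((m:ℝ)+1)
        = (((k+2).choose (m+1) * (m+1) : ℕ) : ℝ) := by push_cast; ring
      _ = (((k+2).choose m * ((k+2) - m) : ℕ) : ℝ) := by rw [h]
      _ = ((k+2).choose m : ℝ) * (((k:ℝ)+2) - m) := by push_cast [Nat.cast_sub hm]; ring
  have hB : ((k:ℝ)+2) * ((k:ℝ)+1) * (k.choose m : ℝ)
      = (((k:ℝ)+2) - m) * (((k:ℝ)+1) - m) * ((k+2).choose m : ℝ) := by
    have h1 := natL k m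
    have h2 := natL (k+1) m
    rcases Nat.lt_or_ge (k+1) m with h | h
    · -- m = k+2 : both sides vanish
      have hm2 : m = k + 2 := by omega
      subst hm2
      rw [Nat.choose_eq_zero_of_lt (by omega)]
      push_cast
      ring_nf
    · have hnat : (k+2) * ((k+1) * Nat.choose k m) = (k+2-m) * ((k+1-m) * Nat.choose (k+2) m) := by
        rw [h1]
        have : (k+2) * ((k+1-m) * Nat.choose (k+1) m) = (k+1-m) * ((k+2) * Nat.choose (k+1) m) := by ring
        rw [this]
        have h2' : (k+1+1) * Nat.choose (k+1) m = (k+1+1-m) * Nat.choose (k+1+1) m := natL (k+1) m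
        rw [h2']
        ring_nf
      calc ((k:ℝ)+2) * ((k:ℝ)+1) * (k.choose m : ℝ)
          = (((k+2) * ((k+1) * Nat.choose k m) : ℕ) : ℝ) := by push_cast; ring
        _ = (((k+2-m) * ((k+1-m) * Nat.choose (k+2) m) : ℕ) : ℝ) := by rw [hnat]
        _ = (((k:ℝ)+2) - m) * (((k:ℝ)+1) - m) * ((k+2).choose m : ℝ) := by
            push_cast [Nat.cast_sub (show m ≤ k+2 by omega), Nat.cast_sub (show m ≤ k+1 by omega)]
            ring
  have aRec : ((m:ℝ)+1) * (rchoose (-1/2) (m+1) * 2^(m+1))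
      = (-(2*(m:ℝ)+1)) * (rchoose (-1/2) m * 2^m) := by
    rw [rchoose_succ]
    have : ((m:ℝ)+1) ≠ 0 := by positivity
    field_simp
    ring
  linear_combination (-(2*(m:ℝ)+1) * (rchoose (-1/2) m * 2^m)) * hA
    + (-(rchoose (-1/2) m * 2^m)) * hB
    + (((m:ℝ)+1) * ((k+2).choose (m+1) : ℝ)) * aRec

lemma Srec (k : ℕ) :
    ((k:ℝ)+2)^2 * Sn (k+2) (-1/2) = ((k:ℝ)+2) * ((k:ℝ)+1) * Sn k (-1/2) := by
  have hext : Sn k (-1/2) = ∑ m ∈ Finset.range (k+3), (k.choose m : ℝ) * rchoose (-1/2) m * 2^m := by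
    unfold Sn
    rw [Finset.sum_range_succ (n := k+2), Finset.sum_range_succ (n := k+1)]
    rw [Nat.choose_eq_zero_of_lt (by omega), Nat.choose_eq_zero_of_lt (by omega)]
    push_cast
    ring
  rw [hext]
  unfold Sn
  rw [Finset.mul_sum, Finset.mul_sum, ← sub_eq_zero, ← Finset.sum_sub_distrib]
  have hthis : ∀ m ∈ Finset.range (k+2+1),
      ((k:ℝ)+2)^2 * (((k+2).choose m : ℝ) * rchoose (-1/2) m * 2^m)
        - ((k:ℝ)+2) * ((k:ℝ)+1) * ((k.choose m : ℝ) * rchoose (-1/2) m * 2^m)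
      = (fun (m : ℕ) => -((m:ℝ)^2) * ((k+2).choose m : ℝ) * (rchoose (-1/2) m * 2^m)) (m+1)
        - (fun (m : ℕ) => -((m:ℝ)^2) * ((k+2).choose m : ℝ) * (rchoose (-1/2) m * 2^m)) m := by
    intro m hm
    simp only [Finset.mem_range] at hm
    have hc := cert k m (by omega)
    simp only []
    push_cast
    push_cast at hc
    linarith [hc]
  rw [Finset.sum_congr rfl hthis,
    Finset.sum_range_sub (f := fun (m : ℕ) => -((m:ℝ)^2) * ((k+2).choose m : ℝ) * (rchoose (-1/2) m * 2^m))]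
  rw [Nat.choose_eq_zero_of_lt (by omega)]
  push_cast
  ring

lemma Sn0 : Sn 0 (-1/2) = 1 := by
  simp [Sn, rchoose_zero]

lemma Sn1 : Sn 1 (-1/2) = 0 := by
  unfold Sn
  rw [Finset.sum_range_succ, Finset.sum_range_one]
  rw [rchoose_zero]
  have : rchoose (-1/2) 1 = -1/2 := by
    show rchoose (-1/2) (0+1) = -1/2
    rw [rchoose_succ, rchoose_zero]
    norm_num
  rw [this]
  norm_num

lemma Seven (k : ℕ) : Sn (2*k) (-1/2) = (-1)^k * rchoose (-1/2) k := by
  induction k with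
  | zero => rw [Sn0]; simp [rchoose_zero]
  | succ k ih =>
    have hrec := Srec (2*k)
    have hne : (((2*k:ℕ):ℝ)+2) ≠ 0 := by positivity
    apply mul_left_cancel₀ (pow_ne_zero 2 hne)
    rw [show 2*(k+1) = 2*k+2 by ring]
    rw [hrec, ih, rchoose_succ]
    have hk : ((k:ℝ)+1) ≠ 0 := by positivity
    push_cast
    field_simp
    ring

lemma Sodd (k : ℕ) : Sn (2*k+1) (-1/2) = 0 := by
  induction k with
  | zero => exact Sn1
  | succ k ih =>
    have h2 : 2*(k+1)+1 = (2*k+1)+2 := by ring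
    rw [h2]
    have hrec := Srec (2*k+1)
    have hne : (((2*k+1:ℕ):ℝ)+2) ≠ 0 := by positivity
    have : (((2*k+1:ℕ):ℝ)+2)^2 * Sn ((2*k+1)+2) (-1/2) = 0 := by
      rw [hrec, ih]; ring
    have h3 : Sn ((2*k+1)+2) (-1/2) = 0 := by
      have := mul_eq_zero.mp this
      rcases this with h | h
      · exact absurd h (by positivity)
      · exact h
    exact h3

lemma key : ∀ n : ℕ, ∀ i j : ℤ, -1 ≤ i → -1 ≤ j → i + j + 2 = (n:ℤ) →
    DR i ((j : ℝ) + 1/2) =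
      ∑ ℓ ∈ Finset.range (((i+1)/2).toNat + 1),
        (-1) ^ ℓ * rchoose (-1/2) ℓ * (Hfun (i - 2*ℓ) j : ℝ) := by
  intro n
  induction n using Nat.strong_induction_on with
  | _ n IH =>
    intro i j hi hj hn
    by_cases hi0 : i = -1
    · subst hi0
      rw [DR_neg (by omega : (-1:ℤ) < 0)]
      have h1 : (((-1:ℤ)+1)/2).toNat + 1 = 1 := by norm_num
      rw [h1, Finset.sum_range_one]
      have h2 : Hfun (-1 - 2*((0:ℕ):ℤ)) j = 0 := Hfun_neg_left (by omega) j
      rw [h2]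
      norm_num
    · by_cases hj0 : j = -1
      · subst hj0
        have hx : (((-1:ℤ)):ℝ) + 1/2 = -1/2 := by norm_num
        rw [hx, DR_eq_Sn (by omega : (0:ℤ) ≤ i)]
        rcases Int.even_or_odd i with ⟨k, hk⟩ | ⟨k, hk⟩
        · -- i = k + k
          have hk0 : (0:ℤ) ≤ k := by omega
          have hN : ((i+1)/2).toNat + 1 = k.toNat + 1 := by omega
          rw [hN]
          rw [Finset.sum_eq_single k.toNat]
          · have hz : i - 2*((k.toNat : ℕ):ℤ) = 0 := by omega
            rw [hz, Hfun_neg_one, if_pos rfl]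
            rw [show i.toNat = 2 * k.toNat by omega, Seven]
            norm_num
          · intro b _ hb
            have hz : Hfun (i - 2*((b:ℕ):ℤ)) (-1) = 0 := by
              rw [Hfun_neg_one, if_neg (by omega)]
            rw [hz]
            norm_num
          · intro hK
            exact absurd (Finset.self_mem_range_succ k.toNat) hK
        · -- i = 2k+1
          have hk0 : (0:ℤ) ≤ k := by omega
          rw [show i.toNat = 2 * k.toNat + 1 by omega, Sodd]
          symm
          apply Finset.sum_eq_zero
          intro ℓ _
          have hz : Hfun (i - 2*((ℓ:ℕ):ℤ)) (-1) = 0 := by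
            rw [Hfun_neg_one, if_neg (by omega)]
          rw [hz]
          norm_num
      · -- step case : i ≥ 0, j ≥ 0
        have hi' : (0:ℤ) ≤ i := by omega
        have hj' : (0:ℤ) ≤ j := by omega
        have hn2 : 2 ≤ n := by omega
        rw [DR_rec i ((j:ℝ) + 1/2)]
        have hx1 : ((j:ℝ) + 1/2) - 1 = (((j-1:ℤ)):ℝ) + 1/2 := by push_cast; ring
        rw [hx1]
        have IH1 := IH (n-1) (by omega) (i-1) j (by omega) (by omega) (by omega)
        have IH2 := IH (n-1) (by omega) i (j-1) (by omega) (by omega) (by omega)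
        have IH3 := IH (n-2) (by omega) (i-1) (j-1) (by omega) (by omega) (by omega)
        rw [IH1, IH2, IH3]
        have hNN : ((i-1+1)/2).toNat + 1 ≤ ((i+1)/2).toNat + 1 := by omega
        have hext : ∀ j' : ℤ,
            (∑ ℓ ∈ Finset.range (((i-1+1)/2).toNat + 1),
              (-1)^ℓ * rchoose (-1/2) ℓ * (Hfun (i - 1 - 2*ℓ) j' : ℝ))
            = ∑ ℓ ∈ Finset.range (((i+1)/2).toNat + 1),
              (-1)^ℓ * rchoose (-1/2) ℓ * (Hfun (i - 1 - 2*ℓ) j' : ℝ) := by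
          intro j'
          apply Finset.sum_subset (Finset.range_subset_range.mpr hNN)
          intro ℓ _ hℓ
          simp only [Finset.mem_range] at hℓ
          have hneg : i - 1 - 2*((ℓ:ℕ):ℤ) < 0 := by omega
          rw [Hfun_neg_left hneg]
          norm_num
        rw [hext j, hext (j-1)]
        rw [← Finset.sum_add_distrib, ← Finset.sum_add_distrib]
        apply Finset.sum_congr rfl
        intro ℓ _
        have hrec := Hfun_rec (i - 2*(ℓ:ℤ)) j hj'
        have e1 : i - 2*(ℓ:ℤ) - 1 = i - 1 - 2*ℓ := by ring
        rw [e1] at hrec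
        rw [hrec]
        push_cast
        ring

theorem stmt9 (i j : ℤ) (hi : -1 ≤ i) (hj : -1 ≤ j) :
    DR i ((j : ℝ) + 1/2) =
      ∑ ℓ ∈ Finset.range (((i+1)/2).toNat + 1),
        (-1) ^ ℓ * rchoose (-1/2) ℓ * (Hfun (i - 2*ℓ) j : ℝ) :=
  key (i+j+2).toNat i j hi hj (by omega)
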